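/- Let K > 0. There exists a constant C > 0, depending only on K, such that for every measurable ρ : ℝ² → [0,∞) with ∫_{ℝ²} ρ(x) dx ≤ K and ∬_{ℝ²×ℝ²} |ln|x−y|| ρ(x)ρ(y) dx dy ≤ K, one has |ln r|^{1/2} ∫_{B(x₀,r)} ρ(x) dx ≤ C for every x₀ ∈ ℝ² and every 0 < r < 1/2. -/

import Mathlib

open MeasureTheory Real Filter
open scoped ENNReal Topology

noncomputable abbrev E2 := EuclideanSpace ℝ (Fin 2)

lemma ae_ne_diag {α : Type*} [MeasurableSpace α] (μ ν : Measure α) [SFinite ν] [NullSingletonClass ν]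
    (hd : MeasurableSet {q : α × α | q.1 = q.2}) :
    ∀ᵐ q ∂(μ.prod ν), q.1 ≠ q.2 := by
  rw [ae_iff]
  have h : {q : α × α | ¬ q.1 ≠ q.2} = {q : α × α | q.1 = q.2} := by
    ext q; simp
  rw [h, Measure.prod_apply hd]
  have : ∀ x : α, ν (Prod.mk x ⁻¹' {q : α × α | q.1 = q.2}) = 0 := by
    intro x
    have : Prod.mk x ⁻¹' {q : α × α | q.1 = q.2} = {x} := by
      ext y; simp [eq_comm]
    rw [this, measure_singleton]
  simp [this]

theorem stmt3 (K : ℝ) (hK : 0 < K) :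
    ∃ C : ℝ, 0 < C ∧ ∀ ρ : E2 → ℝ,
      Measurable ρ → (∀ x, 0 ≤ ρ x) →
      (∫⁻ x, ENNReal.ofReal (ρ x)) ≤ ENNReal.ofReal K →
      (∫⁻ q : E2 × E2, ENNReal.ofReal (|Real.log ‖q.1 - q.2‖| * (ρ q.1 * ρ q.2)))
          ≤ ENNReal.ofReal K →
      ∀ (x₀ : E2) (r : ℝ), 0 < r → r < 1 / 2 →
        |Real.log r| ^ ((1 : ℝ) / 2) * (∫ x in Metric.ball x₀ r, ρ x) ≤ C := by
  refine ⟨Real.sqrt (2 * K) + 2 * K + 1, by positivity, ?_⟩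
  intro ρ hmeas hnn hmass hE x₀ r hr hr2
  set B := Metric.ball x₀ r with hB
  set μ : ℝ≥0∞ := ∫⁻ x in B, ENNReal.ofReal (ρ x) with hμ
  have hμ_le : μ ≤ ENNReal.ofReal K :=
    le_trans (setLIntegral_le_lintegral _ _) hmass
  have hμ_ne : μ ≠ ⊤ := ne_top_of_le_ne_top ENNReal.ofReal_ne_top hμ_le
  set m := ∫ x in B, ρ x with hm
  have hm_eq : m = μ.toReal := by
    rw [hm, hμ, integral_eq_lintegral_of_nonneg_ae (ae_of_all _ hnn)
      hmeas.aestronglyMeasurable.restrict]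
  have hm_nonneg : 0 ≤ m := by
    rw [hm_eq]; exact ENNReal.toReal_nonneg
  have hm_le_K : m ≤ K := by
    rw [hm_eq]
    calc μ.toReal ≤ (ENNReal.ofReal K).toReal :=
          ENNReal.toReal_mono ENNReal.ofReal_ne_top hμ_le
      _ = K := ENNReal.toReal_ofReal hK.le
  -- rewrite rpow (1/2) as sqrt
  rw [← Real.sqrt_eq_rpow]
  by_cases hcase : r < 1 / 4
  · -- key energy estimate
    have ht : 0 < 2 * r := by linarith
    have ht1 : 2 * r < 1 := by linarith
    have hdiagmeas : MeasurableSet {q : E2 × E2 | q.1 = q.2} :=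
      measurableSet_eq_fun measurable_fst measurable_snd
    have hBmeas : MeasurableSet B := Metric.isOpen_ball.measurableSet
    have key : ENNReal.ofReal |Real.log (2 * r)| * (μ * μ) ≤ ENNReal.ofReal K := by
      have hpm : AEMeasurable (fun x => ENNReal.ofReal (ρ x)) (volume.restrict B) :=
        (ENNReal.measurable_ofReal.comp hmeas).aemeasurable
      have heq : (∫⁻ q : E2 × E2, ENNReal.ofReal |Real.log (2 * r)| *
          (ENNReal.ofReal (ρ q.1) * ENNReal.ofReal (ρ q.2))
          ∂((volume.restrict B).prod (volume.restrict B)))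
          = ENNReal.ofReal |Real.log (2 * r)| * (μ * μ) := by
        rw [lintegral_const_mul' _ _ ENNReal.ofReal_ne_top,
          lintegral_prod_mul hpm hpm]
      have hae : ∀ᵐ q : E2 × E2 ∂((volume.restrict B).prod (volume.restrict B)),
          ENNReal.ofReal |Real.log (2 * r)| *
            (ENNReal.ofReal (ρ q.1) * ENNReal.ofReal (ρ q.2)) ≤
          ENNReal.ofReal (|Real.log ‖q.1 - q.2‖| * (ρ q.1 * ρ q.2)) := by
        have h1 : ∀ᵐ q : E2 × E2 ∂((volume.restrict B).prod (volume.restrict B)),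
            q.1 ≠ q.2 := ae_ne_diag _ _ hdiagmeas
        have h2 : ∀ᵐ q : E2 × E2 ∂((volume.restrict B).prod (volume.restrict B)),
            q ∈ B ×ˢ B := by
          rw [Measure.prod_restrict]
          exact ae_restrict_mem (hBmeas.prod hBmeas)
        filter_upwards [h1, h2] with q hne hmem
        obtain ⟨hq1, hq2⟩ := hmem
        have hlt : ‖q.1 - q.2‖ < 2 * r := by
          have := dist_triangle q.1 x₀ q.2
          rw [hB, Metric.mem_ball] at hq1 hq2
          rw [show ‖q.1 - q.2‖ = dist q.1 q.2 from (dist_eq_norm _ _).symm]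
          calc dist q.1 q.2 ≤ dist q.1 x₀ + dist x₀ q.2 := dist_triangle _ _ _
            _ < r + r := by rw [dist_comm x₀ q.2]; exact add_lt_add hq1 hq2
            _ = 2 * r := by ring
        have hpos : 0 < ‖q.1 - q.2‖ := by
          rw [norm_pos_iff, sub_ne_zero]; exact hne
        have hlog : |Real.log (2 * r)| ≤ |Real.log ‖q.1 - q.2‖| := by
          rw [abs_of_nonpos (Real.log_nonpos ht.le ht1.le),
            abs_of_nonpos (Real.log_nonpos hpos.le (by linarith))]
          have := Real.log_le_log hpos hlt.le
          linarith
        calc ENNReal.ofReal |Real.log (2 * r)| *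
              (ENNReal.ofReal (ρ q.1) * ENNReal.ofReal (ρ q.2))
            = ENNReal.ofReal (|Real.log (2 * r)| * (ρ q.1 * ρ q.2)) := by
              rw [ENNReal.ofReal_mul (abs_nonneg _), ENNReal.ofReal_mul (hnn _)]
          _ ≤ ENNReal.ofReal (|Real.log ‖q.1 - q.2‖| * (ρ q.1 * ρ q.2)) := by
              apply ENNReal.ofReal_le_ofReal
              exact mul_le_mul_of_nonneg_right hlog (mul_nonneg (hnn _) (hnn _))
      calc ENNReal.ofReal |Real.log (2 * r)| * (μ * μ)
          = ∫⁻ q : E2 × E2, ENNReal.ofReal |Real.log (2 * r)| *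
              (ENNReal.ofReal (ρ q.1) * ENNReal.ofReal (ρ q.2))
              ∂((volume.restrict B).prod (volume.restrict B)) := heq.symm
        _ ≤ ∫⁻ q : E2 × E2, ENNReal.ofReal (|Real.log ‖q.1 - q.2‖| * (ρ q.1 * ρ q.2))
              ∂((volume.restrict B).prod (volume.restrict B)) := lintegral_mono_ae hae
        _ = ∫⁻ q in B ×ˢ B, ENNReal.ofReal (|Real.log ‖q.1 - q.2‖| * (ρ q.1 * ρ q.2))
              ∂(volume.prod volume) := by rw [Measure.prod_restrict]
        _ ≤ ∫⁻ q : E2 × E2, ENNReal.ofReal (|Real.log ‖q.1 - q.2‖| * (ρ q.1 * ρ q.2))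
              ∂(volume.prod volume) := setLIntegral_le_lintegral _ _
        _ = ∫⁻ q : E2 × E2, ENNReal.ofReal (|Real.log ‖q.1 - q.2‖| * (ρ q.1 * ρ q.2)) := by
              rfl
        _ ≤ ENNReal.ofReal K := hE
    -- convert to reals
    have keyR : |Real.log (2 * r)| * (m * m) ≤ K := by
      have h := ENNReal.toReal_mono ENNReal.ofReal_ne_top key
      rw [ENNReal.toReal_mul, ENNReal.toReal_mul, ENNReal.toReal_ofReal (abs_nonneg _),
        ENNReal.toReal_ofReal hK.le] at h
      rw [hm_eq]; exact h
    -- |log r| ≤ 2 |log (2r)|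
    have hlogr : |Real.log r| ≤ 2 * |Real.log (2 * r)| := by
      rw [abs_of_nonpos (Real.log_nonpos hr.le (by linarith)),
        abs_of_nonpos (Real.log_nonpos ht.le ht1.le),
        Real.log_mul (by norm_num) hr.ne']
      have h4 : Real.log r ≤ Real.log (1/4) := Real.log_le_log hr hcase.le
      have : Real.log (1/4) = -(2 * Real.log 2) := by
        rw [show (1/4 : ℝ) = (2:ℝ)^(-2 : ℤ) by norm_num, Real.log_zpow]; push_cast; ring
      nlinarith [Real.log_pos (by norm_num : (1:ℝ) < 2)]
    have h2K : |Real.log r| * (m * m) ≤ 2 * K := by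
      nlinarith [abs_nonneg (Real.log (2*r)), mul_nonneg hm_nonneg hm_nonneg]
    have : Real.sqrt |Real.log r| * m ≤ Real.sqrt (2 * K) := by
      rw [show Real.sqrt |Real.log r| * m = Real.sqrt (|Real.log r| * (m * m)) by
        rw [Real.sqrt_mul (abs_nonneg _), show m * m = m ^ 2 by ring,
          Real.sqrt_sq hm_nonneg]]
      exact Real.sqrt_le_sqrt h2K
    nlinarith [Real.sqrt_nonneg (2*K)]
  · -- 1/4 ≤ r < 1/2 : |log r| ≤ log 4 ≤ 2
    push_neg at hcase
    have hlogr : |Real.log r| ≤ 2 := by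
      rw [abs_of_nonpos (Real.log_nonpos hr.le (by linarith))]
      have h4 : Real.log (1/4) ≤ Real.log r := Real.log_le_log (by norm_num) hcase
      have : Real.log (1/4) = -(2 * Real.log 2) := by
        rw [show (1/4 : ℝ) = (2:ℝ)^(-2 : ℤ) by norm_num, Real.log_zpow]; push_cast; ring
      nlinarith [Real.log_le_sub_one_of_pos (by norm_num : (0:ℝ) < 2)]
    have hs : Real.sqrt |Real.log r| ≤ 2 := by
      calc Real.sqrt |Real.log r| ≤ Real.sqrt 2 := Real.sqrt_le_sqrt hlogr
        _ ≤ 2 := by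
          nlinarith [Real.sq_sqrt (by norm_num : (0:ℝ) ≤ 2), Real.sqrt_nonneg 2]
    have : Real.sqrt |Real.log r| * m ≤ 2 * K :=
      mul_le_mul hs hm_le_K hm_nonneg (by norm_num)
    nlinarith [Real.sqrt_nonneg (2*K)]
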